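/- Let n ∈ ℕ, let Z be a nonempty compact subset of ℝ^{n+1}, μ₀ a Borel probability measure on Z, W₁, W₂ : C(Z,Z) → ℝ, and ε > 0. Define W_ε : C(Z,Z) × C(Z,Z) → ℝ by W_ε(Φ₁,Φ₂) := W₂(Φ₂) − W₁(Φ₁) + (1/ε)‖Φ₁ − Φ₂‖²_{L²_{μ₀}}. Suppose (Φ̄₁, Φ̄₂) ∈ C(Z,Z) × C(Z,Z) satisfies W_ε(Φ̄₁,Φ̄₂) ≤ W_ε(Φ₁,Φ₂) + ε(‖Φ₁ − Φ̄₁‖_∞ + ‖Φ₂ − Φ̄₂‖_∞) for all (Φ₁,Φ₂) ∈ C(Z,Z) × C(Z,Z). Then (2/ε)(Φ̄₁ − Φ̄₂) ∈ D⁺_ε W₁(Φ̄₁) and (2/ε)(Φ̄₁ − Φ̄₂) ∈ D⁻_ε W₂(Φ̄₂). -/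

import Mathlib

open MeasureTheory Set

noncomputable section

abbrev Euc (n : ℕ) : Type := EuclideanSpace ℝ (Fin (n + 1))

/-- The sup norm `‖Ψ‖_∞ = sup_{z ∈ Z} ‖Ψ z‖` of a continuous map `Ψ : Z → ℝ^{n+1}`. -/
def supN {n : ℕ} {Zs : Set (Euc n)} (Ψ : C(↥Zs, Euc n)) : ℝ := ⨆ z : ↥Zs, ‖Ψ z‖

/-- The uniform distance `‖Φ - Ψ‖_∞` between two elements of `C(Z,Z)`. -/
def supDist {n : ℕ} {Zs : Set (Euc n)} (Φ Ψ : C(↥Zs, ↥Zs)) : ℝ :=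
  ⨆ z : ↥Zs, ‖(Φ z : Euc n) - (Ψ z : Euc n)‖

/-- The inclusion of `C(Z,Z)` into `C(Z,ℝ^{n+1})`. -/
def toE {n : ℕ} {Zs : Set (Euc n)} (Φ : C(↥Zs, ↥Zs)) : C(↥Zs, Euc n) :=
  ⟨fun z => (Φ z : Euc n), continuous_subtype_val.comp Φ.continuous⟩

/-- The map `Φ + Ψ`, as an element of `C(Z,Z)`, given that it maps into `Z`. -/
def addIn {n : ℕ} {Zs : Set (Euc n)} (Φ : C(↥Zs, ↥Zs)) (Ψ : C(↥Zs, Euc n))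
    (h : ∀ z : ↥Zs, ((Φ z : Euc n) + Ψ z) ∈ Zs) : C(↥Zs, ↥Zs) :=
  ⟨fun z => ⟨(Φ z : Euc n) + Ψ z, h z⟩,
    Continuous.subtype_mk ((continuous_subtype_val.comp Φ.continuous).add Ψ.continuous) _⟩

/-- `p` belongs to the `δ`-superdifferential `D⁺_δ w(Φ₀)`. -/
def memSuperDiff {n : ℕ} {Zs : Set (Euc n)} (μ₀ : Measure ↥Zs) (δ : ℝ)
    (w : C(↥Zs, ↥Zs) → ℝ) (Φ₀ : C(↥Zs, ↥Zs)) (p : C(↥Zs, Euc n)) : Prop :=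
  ∀ ε : ℝ, 0 < ε → ∃ r : ℝ, 0 < r ∧
    ∀ (Ψ : C(↥Zs, Euc n)) (h : ∀ z : ↥Zs, ((Φ₀ z : Euc n) + Ψ z) ∈ Zs),
      0 < supN Ψ → supN Ψ ≤ r →
      w (addIn Φ₀ Ψ h) - w Φ₀ - ∫ z, (inner ℝ (Ψ z) (p z) : ℝ) ∂μ₀ ≤ (δ + ε) * supN Ψ

/-- `p` belongs to the `δ`-subdifferential `D⁻_δ w(Φ₀)`. -/
def memSubDiff {n : ℕ} {Zs : Set (Euc n)} (μ₀ : Measure ↥Zs) (δ : ℝ)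
    (w : C(↥Zs, ↥Zs) → ℝ) (Φ₀ : C(↥Zs, ↥Zs)) (p : C(↥Zs, Euc n)) : Prop :=
  ∀ ε : ℝ, 0 < ε → ∃ r : ℝ, 0 < r ∧
    ∀ (Ψ : C(↥Zs, Euc n)) (h : ∀ z : ↥Zs, ((Φ₀ z : Euc n) + Ψ z) ∈ Zs),
      0 < supN Ψ → supN Ψ ≤ r →
      -((δ + ε) * supN Ψ) ≤ w (addIn Φ₀ Ψ h) - w Φ₀ - ∫ z, (inner ℝ (Ψ z) (p z) : ℝ) ∂μ₀

section helpers
set_option linter.unusedSectionVars false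

variable {n : ℕ} {Zs : Set (Euc n)} [CompactSpace ↥Zs] [Nonempty ↥Zs]
  (μ₀ : Measure ↥Zs) [IsFiniteMeasure μ₀]

lemma cont_integrable' {f : ↥Zs → ℝ} (hf : Continuous f) : Integrable f μ₀ :=
  hf.integrable_of_hasCompactSupport (HasCompactSupport.of_compactSpace f)

lemma norm_le_supN' (Ψ : C(↥Zs, Euc n)) (z : ↥Zs) : ‖Ψ z‖ ≤ supN Ψ :=
  le_ciSup (isCompact_range (Ψ.continuous.norm)).bddAbove z

lemma supDist_addIn' (Φ : C(↥Zs, ↥Zs)) (Ψ : C(↥Zs, Euc n))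
    (h : ∀ z : ↥Zs, ((Φ z : Euc n) + Ψ z) ∈ Zs) :
    supDist (addIn Φ Ψ h) Φ = supN Ψ := by
  simp [supDist, supN, addIn, add_sub_cancel_left]

lemma supDist_self' (Φ : C(↥Zs, ↥Zs)) : supDist Φ Φ = 0 := by
  simp [supDist, sub_self, ciSup_const]

lemma expand_sq' (A Ψ : C(↥Zs, Euc n)) :
    ∫ z, ‖A z + Ψ z‖ ^ 2 ∂μ₀ =
      (∫ z, ‖A z‖ ^ 2 ∂μ₀) + 2 * (∫ z, (inner ℝ (Ψ z) (A z) : ℝ) ∂μ₀) +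
        ∫ z, ‖Ψ z‖ ^ 2 ∂μ₀ := by
  have h1 : ∀ z : ↥Zs, ‖A z + Ψ z‖ ^ 2 =
      ‖A z‖ ^ 2 + (2 * (inner ℝ (Ψ z) (A z) : ℝ) + ‖Ψ z‖ ^ 2) := by
    intro z
    rw [norm_add_sq_real, real_inner_comm]; ring
  have intA : Integrable (fun z => ‖A z‖ ^ 2) μ₀ :=
    cont_integrable' μ₀ (A.continuous.norm.pow 2)
  have intI : Integrable (fun z => 2 * (inner ℝ (Ψ z) (A z) : ℝ)) μ₀ :=
    (cont_integrable' μ₀ (Ψ.continuous.inner A.continuous)).const_mul 2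
  have intK : Integrable (fun z => ‖Ψ z‖ ^ 2) μ₀ :=
    cont_integrable' μ₀ (Ψ.continuous.norm.pow 2)
  calc ∫ z, ‖A z + Ψ z‖ ^ 2 ∂μ₀
      = ∫ z, (‖A z‖ ^ 2 + (2 * (inner ℝ (Ψ z) (A z) : ℝ) + ‖Ψ z‖ ^ 2)) ∂μ₀ := by
        simp only [h1]
    _ = (∫ z, ‖A z‖ ^ 2 ∂μ₀) + ∫ z, (2 * (inner ℝ (Ψ z) (A z) : ℝ) + ‖Ψ z‖ ^ 2) ∂μ₀ :=
        integral_add intA (intI.add intK)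
    _ = _ := by rw [integral_add intI intK, integral_const_mul]; ring

lemma int_sq_le' [IsProbabilityMeasure μ₀] (Ψ : C(↥Zs, Euc n)) :
    ∫ z, ‖Ψ z‖ ^ 2 ∂μ₀ ≤ supN Ψ * supN Ψ := by
  have intK : Integrable (fun z => ‖Ψ z‖ ^ 2) μ₀ :=
    cont_integrable' μ₀ (Ψ.continuous.norm.pow 2)
  calc ∫ z, ‖Ψ z‖ ^ 2 ∂μ₀ ≤ ∫ _z, supN Ψ * supN Ψ ∂μ₀ := by
        refine integral_mono intK (integrable_const _) fun z => ?_
        have h1 := norm_le_supN' Ψ z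
        have h2 := norm_nonneg (Ψ z)
        nlinarith
    _ = supN Ψ * supN Ψ := by simp
end helpers

/-- The Ekeland point of the doubled functional `W_ε` yields an element of the
`ε`-superdifferential of `W₁` at `Φ̄₁` and of the `ε`-subdifferential of `W₂` at `Φ̄₂`. -/
theorem ekeland_point_gives_differentials
    (n : ℕ) (Zs : Set (Euc n)) (hZc : IsCompact Zs) (hZn : Zs.Nonempty)
    (μ₀ : Measure ↥Zs) [IsProbabilityMeasure μ₀]
    (W₁ W₂ : C(↥Zs, ↥Zs) → ℝ) (ε : ℝ) (hε : 0 < ε)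
    (Φb₁ Φb₂ : C(↥Zs, ↥Zs))
    (hek : ∀ Φ₁ Φ₂ : C(↥Zs, ↥Zs),
      W₂ Φb₂ - W₁ Φb₁ + (1 / ε) * ∫ z, ‖(Φb₁ z : Euc n) - (Φb₂ z : Euc n)‖ ^ 2 ∂μ₀ ≤
        W₂ Φ₂ - W₁ Φ₁ + (1 / ε) * (∫ z, ‖(Φ₁ z : Euc n) - (Φ₂ z : Euc n)‖ ^ 2 ∂μ₀) +
          ε * (supDist Φ₁ Φb₁ + supDist Φ₂ Φb₂)) :
    memSuperDiff μ₀ ε W₁ Φb₁ ((2 / ε) • (toE Φb₁ - toE Φb₂)) ∧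
      memSubDiff μ₀ ε W₂ Φb₂ ((2 / ε) • (toE Φb₁ - toE Φb₂)) := by
  haveI : CompactSpace ↥Zs := isCompact_iff_compactSpace.mp hZc
  haveI : Nonempty ↥Zs := hZn.to_subtype
  have hεne : ε ≠ 0 := ne_of_gt hε
  -- the difference map
  set A : C(↥Zs, Euc n) := toE Φb₁ - toE Φb₂ with hA
  have hAz : ∀ z : ↥Zs, A z = (Φb₁ z : Euc n) - (Φb₂ z : Euc n) := fun z => by
    simp [hA, toE]
  -- notation for the three integrals
  set I0 : ℝ := ∫ z, ‖(Φb₁ z : Euc n) - (Φb₂ z : Euc n)‖ ^ 2 ∂μ₀ with hI0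
  have hI0A : (∫ z, ‖A z‖ ^ 2 ∂μ₀) = I0 := by
    simp only [hAz, hI0]
  -- the inner product integral with p
  have hinner : ∀ Ψ : C(↥Zs, Euc n),
      (∫ z, (inner ℝ (Ψ z) (((2 / ε) • A) z) : ℝ) ∂μ₀) =
        (2 / ε) * ∫ z, (inner ℝ (Ψ z) (A z) : ℝ) ∂μ₀ := by
    intro Ψ
    simp only [ContinuousMap.smul_apply, real_inner_smul_right]
    exact integral_const_mul _ _
  constructor
  · -- superdifferential of W₁
    intro ε' hε'
    refine ⟨ε * ε', mul_pos hε hε', fun Ψ h hpos hle => ?_⟩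
    set J : ℝ := ∫ z, (inner ℝ (Ψ z) (A z) : ℝ) ∂μ₀ with hJ
    set K : ℝ := ∫ z, ‖Ψ z‖ ^ 2 ∂μ₀ with hK
    have hmain := hek (addIn Φb₁ Ψ h) Φb₂
    have hI1 : (∫ z, ‖((addIn Φb₁ Ψ h) z : Euc n) - (Φb₂ z : Euc n)‖ ^ 2 ∂μ₀)
        = I0 + 2 * J + K := by
      have hpt : ∀ z : ↥Zs, ((addIn Φb₁ Ψ h) z : Euc n) - (Φb₂ z : Euc n)
          = A z + Ψ z := by
        intro z
        simp only [addIn, ContinuousMap.coe_mk, ContinuousMap.neg_apply, hAz]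
        abel
      calc (∫ z, ‖((addIn Φb₁ Ψ h) z : Euc n) - (Φb₂ z : Euc n)‖ ^ 2 ∂μ₀)
          = ∫ z, ‖A z + Ψ z‖ ^ 2 ∂μ₀ := by simp only [hpt]
        _ = I0 + 2 * J + K := by rw [expand_sq' μ₀ A Ψ, hI0A]
    rw [hI1, supDist_addIn', supDist_self'] at hmain
    rw [hinner Ψ]
    have hKle : K ≤ ε * ε' * supN Ψ := by
      have h1 := int_sq_le' μ₀ Ψ
      nlinarith [hpos.le]
    have e1 : (1 / ε) * (I0 + 2 * J + K) = (1 / ε) * I0 + (2 / ε) * J + (1 / ε) * K := by field_simp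

    have e2 : (1 / ε) * K ≤ ε' * supN Ψ := by
      have h1 : (1 / ε) * K ≤ (1 / ε) * (ε * ε' * supN Ψ) :=
        mul_le_mul_of_nonneg_left hKle (by positivity)
      have h2 : (1 / ε) * (ε * ε' * supN Ψ) = ε' * supN Ψ := by field_simp
      linarith
    linarith
  · -- subdifferential of W₂
    intro ε' hε'
    refine ⟨ε * ε', mul_pos hε hε', fun Ψ h hpos hle => ?_⟩
    set J : ℝ := ∫ z, (inner ℝ (Ψ z) (A z) : ℝ) ∂μ₀ with hJ
    set K : ℝ := ∫ z, ‖Ψ z‖ ^ 2 ∂μ₀ with hK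
    have hmain := hek Φb₁ (addIn Φb₂ Ψ h)
    have hI2 : (∫ z, ‖(Φb₁ z : Euc n) - (((addIn Φb₂ Ψ h) z : Euc n))‖ ^ 2 ∂μ₀)
        = I0 - 2 * J + K := by
      have hpt : ∀ z : ↥Zs, (Φb₁ z : Euc n) - (((addIn Φb₂ Ψ h) z : Euc n))
          = A z + (-Ψ) z := by
        intro z
        simp only [addIn, ContinuousMap.coe_mk, ContinuousMap.neg_apply, hAz]
        abel
      calc (∫ z, ‖(Φb₁ z : Euc n) - (((addIn Φb₂ Ψ h) z : Euc n))‖ ^ 2 ∂μ₀)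
          = ∫ z, ‖A z + (-Ψ) z‖ ^ 2 ∂μ₀ := by simp only [hpt]
        _ = I0 - 2 * J + K := by
            rw [expand_sq' μ₀ A (-Ψ), hI0A]
            simp only [ContinuousMap.neg_apply, inner_neg_left, norm_neg]
            rw [integral_neg]
            rw [hJ, hK]; ring
    rw [hI2, supDist_addIn', supDist_self'] at hmain
    rw [hinner Ψ]
    have hKle : K ≤ ε * ε' * supN Ψ := by
      have h1 := int_sq_le' μ₀ Ψ
      nlinarith [hpos.le]
    have e1 : (1 / ε) * (I0 - 2 * J + K) = (1 / ε) * I0 - (2 / ε) * J + (1 / ε) * K := by field_simp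

    have e2 : (1 / ε) * K ≤ ε' * supN Ψ := by
      have h1 : (1 / ε) * K ≤ (1 / ε) * (ε * ε' * supN Ψ) :=
        mul_le_mul_of_nonneg_left hKle (by positivity)
      have h2 : (1 / ε) * (ε * ε' * supN Ψ) = ε' * supN Ψ := by field_simp
      linarith
    linarith
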